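/- arXiv:1802.02452 — 7 statements merged into one kernel-verified Lean document; each statement's English description precedes it below -/
import Mathlib

section
/- For n ≥ 1, in the Fibonacci-sum set-graph G^F_{A^(n)}, every vertex has even degree, where loops contribute 2 to the degree of their vertex. -/
/-- A natural number is a Fibonacci number. -/
def IsFib (x : ℕ) : Prop := ∃ m, Nat.fib m = x

open Classical in
/-- Multiplicity of edges between vertices (subsets) `S` and `T` in the
Fibonacci-sum set-graph: pairs `(i,j)`, `i ∈ S`, `j ∈ T`, `i ≠ j`, `i+j` Fibonacci. -/
noncomputable def eps (S T : Finset ℕ) : ℕ :=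
  ((S ×ˢ T).filter (fun p => p.1 ≠ p.2 ∧ IsFib (p.1 + p.2))).card

open Classical in
/-- Loop number of a vertex `S`: unordered pairs `{i,j} ⊆ S`, `i ≠ j`, `i+j` Fibonacci. -/
noncomputable def loopNum (S : Finset ℕ) : ℕ :=
  ((S ×ˢ S).filter (fun p => p.1 < p.2 ∧ IsFib (p.1 + p.2))).card

/-- Vertex set of the set-graph of `{1,…,n}`: nonempty subsets. -/
def setVerts (n : ℕ) : Finset (Finset ℕ) :=
  (Finset.Icc 1 n).powerset.filter (fun S => S.Nonempty)

/-- Degree in the Fibonacci-sum set-graph: a loop (counted in `eps S S` as two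
ordered pairs) contributes 2 to the degree. -/
noncomputable def setDeg (n : ℕ) (S : Finset ℕ) : ℕ :=
  ∑ T ∈ setVerts n, eps S T

open Classical in
/-- The number of nonempty subsets of `{1,…,n}` containing a fixed `j ∈ {1,…,n}`
is `2 ^ (n-1)`. -/
lemma count_containing (n j : ℕ) (hj : j ∈ Finset.Icc 1 n) :
    ((setVerts n).filter (fun T => j ∈ T)).card = 2 ^ (n - 1) := by
  have h1 : ((setVerts n).filter (fun T => j ∈ T))
      = (Finset.Icc 1 n).powerset.filter (fun T => j ∈ T) := by
    ext T
    simp only [setVerts, Finset.mem_filter, Finset.mem_powerset, and_assoc]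
    constructor
    · rintro ⟨h, _, hj⟩; exact ⟨h, hj⟩
    · rintro ⟨h, hjT⟩; exact ⟨h, ⟨j, hjT⟩, hjT⟩
  rw [h1]
  have h2 : ((Finset.Icc 1 n).powerset.filter (fun T => j ∈ T)).card
      = ((Finset.Icc 1 n).erase j).powerset.card := by
    apply Finset.card_bij' (fun T _ => T.erase j) (fun T _ => insert j T)
    · intro T hT
      simp only [Finset.mem_filter] at hT
      exact Finset.insert_erase hT.2
    · intro T hT
      simp only [Finset.mem_powerset] at hT
      exact Finset.erase_insert (fun hjT => (Finset.notMem_erase j _) (hT hjT))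
    · intro T hT
      simp only [Finset.mem_filter, Finset.mem_powerset] at hT
      simp only [Finset.mem_powerset]
      exact Finset.erase_subset_erase j hT.1
    · intro T hT
      simp only [Finset.mem_powerset] at hT
      simp only [Finset.mem_filter, Finset.mem_powerset]
      exact ⟨Finset.insert_subset hj (hT.trans (Finset.erase_subset _ _)),
        Finset.mem_insert_self _ _⟩
  rw [h2, Finset.card_powerset, Finset.card_erase_of_mem hj, Nat.card_Icc]
  simp

/-- For `n ≥ 1`, every vertex of the Fibonacci-sum set-graph has even degree. -/
theorem fibSumSetGraph_degree_even (n : ℕ) (hn : 1 ≤ n) (S : Finset ℕ)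
    (hS : S ∈ setVerts n) : Even (setDeg n S) := by
  classical
  have hsub : S ⊆ Finset.Icc 1 n :=
    Finset.mem_powerset.mp (Finset.mem_filter.mp hS).1
  have key : setDeg n S = ∑ i ∈ S, ∑ j ∈ Finset.Icc 1 n,
      (if i ≠ j ∧ IsFib (i + j) then ((setVerts n).filter (fun T => j ∈ T)).card else 0) := by
    unfold setDeg eps
    have step1 : ∀ T ∈ setVerts n,
        ((S ×ˢ T).filter (fun p => p.1 ≠ p.2 ∧ IsFib (p.1 + p.2))).card
          = ∑ i ∈ S, ∑ j ∈ Finset.Icc 1 n,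
              (if j ∈ T then (if i ≠ j ∧ IsFib (i + j) then 1 else 0) else 0) := by
      intro T hT
      have hTsub : T ⊆ Finset.Icc 1 n :=
        Finset.mem_powerset.mp (Finset.mem_filter.mp hT).1
      rw [Finset.card_filter, Finset.sum_product]
      refine Finset.sum_congr rfl (fun i _ => ?_)
      rw [Finset.sum_ite_mem, Finset.inter_comm, Finset.inter_eq_left.mpr hTsub]
    rw [Finset.sum_congr rfl step1, Finset.sum_comm]
    refine Finset.sum_congr rfl (fun i _ => ?_)
    rw [Finset.sum_comm]
    refine Finset.sum_congr rfl (fun j _ => ?_)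
    rw [← Finset.sum_filter, Finset.sum_const, smul_eq_mul]
    by_cases h : i ≠ j ∧ IsFib (i + j) <;> simp [h]
  rw [key]
  refine Finset.even_sum _ (fun i hi => Finset.even_sum _ (fun j hj => ?_))
  by_cases h : i ≠ j ∧ IsFib (i + j)
  · rw [if_pos h, count_containing n j hj, Nat.even_pow]
    have hi' := hsub hi
    rw [Finset.mem_Icc] at hi'
    have hj' := Finset.mem_Icc.mp hj
    exact ⟨even_two, by omega⟩
  · rw [if_neg h]; exact Even.zero
end

section
/- For n ≥ 3, the Fibonacci-sum set-graph G^F_{A^(n)} has no pendant vertices, i.e., every vertex has degree at least 2. -/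
/-- Every `i ∈ [1,n]` has a partner `j ∈ [1,n]`, `j ≠ i`, with `i + j` Fibonacci. -/
lemma exists_partner (n i : ℕ) (hn : 3 ≤ n) (hi1 : 1 ≤ i) (hi2 : i ≤ n) :
    ∃ j, 1 ≤ j ∧ j ≤ n ∧ j ≠ i ∧ IsFib (i + j) := by
  rcases Nat.lt_or_ge i 3 with h3 | h3
  · interval_cases i
    · exact ⟨2, by omega, by omega, by omega, ⟨4, by decide⟩⟩
    · exact ⟨1, by omega, by omega, by omega, ⟨4, by decide⟩⟩
  · have hex : ∃ k, i < Nat.fib k := ⟨2 * i, Nat.lt_of_lt_of_le (by omega)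
      (Nat.le_fib_self (by omega))⟩
    set k := Nat.find hex with hk
    have hki : i < Nat.fib k := Nat.find_spec hex
    have hk5 : 5 ≤ k := by
      rw [hk, Nat.le_find_iff]
      intro m hm
      simp only [not_lt]
      have h4 : Nat.fib 4 = 3 := by decide
      calc Nat.fib m ≤ Nat.fib 4 := Nat.fib_mono (by omega)
        _ ≤ i := by omega
    have hmin : Nat.fib (k - 1) ≤ i := by
      have := Nat.find_min hex (show k - 1 < k by omega)
      omega
    have hlt : Nat.fib (k - 2) < Nat.fib (k - 1) := by
      have := Nat.fib_lt_fib_succ (n := k - 2) (by omega)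
      have h2 : k - 2 + 1 = k - 1 := by omega
      rwa [h2] at this
    have hrec : Nat.fib k = Nat.fib (k - 2) + Nat.fib (k - 1) := by
      clear_value k
      obtain ⟨m, rfl⟩ : ∃ m, k = m + 2 := ⟨k - 2, by omega⟩
      simp only [Nat.add_sub_cancel, show m + 2 - 1 = m + 1 from rfl]
      exact Nat.fib_add_two
    have hub : Nat.fib k < 2 * i := by omega
    refine ⟨Nat.fib k - i, by omega, by omega, by omega, ⟨k, by omega⟩⟩

/-- For `n ≥ 3`, the Fibonacci-sum set-graph has no pendant vertices. -/
theorem fibSumSetGraph_no_pendant (n : ℕ) (hn : 3 ≤ n) (S : Finset ℕ)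
    (hS : S ∈ setVerts n) : 2 ≤ setDeg n S := by
  classical
  simp only [setVerts, Finset.mem_filter, Finset.mem_powerset] at hS
  obtain ⟨hsub, i, hiS⟩ := hS
  have hi := hsub hiS
  rw [Finset.mem_Icc] at hi
  obtain ⟨j, hj1, hjn, hji, hfib⟩ := exists_partner n i hn hi.1 hi.2
  -- a second element k ≠ j in [1,n]
  set k : ℕ := if j = 1 then 2 else 1 with hkdef
  have hk1 : 1 ≤ k := by rw [hkdef]; split <;> omega
  have hkn : k ≤ n := by rw [hkdef]; split <;> omega
  have hkj : k ≠ j := by rw [hkdef]; split <;> omega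
  set T1 : Finset ℕ := {j} with hT1
  set T2 : Finset ℕ := {j, k} with hT2
  have hT1mem : T1 ∈ setVerts n := by
    simp [setVerts, hT1, Finset.singleton_subset_iff, Finset.mem_Icc]
    omega
  have hT2mem : T2 ∈ setVerts n := by
    simp [setVerts, hT2, Finset.insert_subset_iff, Finset.singleton_subset_iff,
      Finset.mem_Icc, Finset.insert_nonempty]
    omega
  have hne : T1 ≠ T2 := by
    intro h
    have : k ∈ T1 := h ▸ (by simp [hT2])
    simp [hT1] at this
    exact hkj this
  have he1 : 1 ≤ eps S T1 := by
    rw [eps, Nat.one_le_iff_ne_zero, ← Nat.pos_iff_ne_zero, Finset.card_pos]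
    exact ⟨(i, j), by simp [hT1, hiS, Ne.symm hji, hfib]⟩
  have he2 : 1 ≤ eps S T2 := by
    rw [eps, Nat.one_le_iff_ne_zero, ← Nat.pos_iff_ne_zero, Finset.card_pos]
    exact ⟨(i, j), by simp [hT2, hiS, Ne.symm hji, hfib]⟩
  calc 2 ≤ eps S T1 + eps S T2 := by omega
    _ = ∑ T ∈ {T1, T2}, eps S T := (Finset.sum_pair hne).symm
    _ ≤ setDeg n S := Finset.sum_le_sum_of_subset (by
        intro T hT
        simp only [Finset.mem_insert, Finset.mem_singleton] at hT
        rcases hT with rfl | rfl <;> assumption)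
end

section
/- For n ≥ 2, the Fibonacci-sum set-graph G^F_{A^(n)} is connected: between any two nonempty subsets of {1,...,n} there is a path in the graph. -/
/-- Vertices of the (popped) Fibonacci-sum set-graph: nonempty subsets of `{1,…,n}`. -/
def Vtx (n : ℕ) := {S : Finset ℕ // S ⊆ Finset.Icc 1 n ∧ S.Nonempty}

/-- The popped Fibonacci-sum set-graph: distinct nonempty subsets `S, T` of `{1,…,n}`
are adjacent iff there are `i ∈ S`, `j ∈ T`, `i ≠ j`, with `i + j` Fibonacci. -/
def poppedFibGraph (n : ℕ) : SimpleGraph (Vtx n) where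
  Adj A B := A ≠ B ∧ ∃ i ∈ A.1, ∃ j ∈ B.1, i ≠ j ∧ IsFib (i + j)
  symm := ⟨by
    rintro A B ⟨hne, i, hi, j, hj, hij, hf⟩
    exact ⟨hne.symm, j, hj, i, hi, hij.symm, by rwa [Nat.add_comm]⟩⟩
  loopless := ⟨by rintro A ⟨hne, -⟩; exact hne rfl⟩

/-- Key lemma: for `a ≥ 2` there is `b` with `1 ≤ b < a` and `a + b` Fibonacci. -/
lemma exists_fib_partner_s3 {a : ℕ} (ha : 2 ≤ a) :
    ∃ b, 1 ≤ b ∧ b < a ∧ IsFib (a + b) := by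
  have hex : ∃ m, a < Nat.fib m := by
    refine ⟨a + 2, ?_⟩
    have := Nat.le_fib_add_one (a + 2)
    omega
  classical
  let m := Nat.find hex
  have hm : a < Nat.fib m := Nat.find_spec hex
  have hm4 : 4 ≤ m := by
    by_contra h
    push_neg at h
    interval_cases m <;> simp_all [Nat.fib] <;> omega
  have hmin : Nat.fib (m - 1) ≤ a := by
    by_contra h
    push_neg at h
    exact absurd (Nat.find_min hex (m := m - 1) (by omega)) (by simpa using h)
  have hlt : Nat.fib (m - 2) < Nat.fib (m - 1) := by
    have : Nat.fib (m - 2) < Nat.fib (m - 2 + 1) :=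
      Nat.fib_lt_fib_succ (by omega)
    simpa [Nat.sub_add_cancel, show m - 2 + 1 = m - 1 by omega] using this
  have hfib : Nat.fib m = Nat.fib (m - 1) + Nat.fib (m - 2) := by
    have h2 := Nat.fib_add_two (n := m - 2)
    rw [show m - 2 + 2 = m by omega, show m - 2 + 1 = m - 1 by omega] at h2
    omega
  refine ⟨Nat.fib m - a, by omega, by omega, ⟨m, by omega⟩⟩

/-- singleton vertex -/
def sVtx (n a : ℕ) (h1 : 1 ≤ a) (h2 : a ≤ n) : Vtx n :=
  ⟨{a}, by simpa [Finset.singleton_subset_iff, Finset.mem_Icc] using ⟨h1, h2⟩,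
    Finset.singleton_nonempty a⟩

lemma singleton_reach (n : ℕ) (hn : 2 ≤ n) :
    ∀ a (h1 : 1 ≤ a) (h2 : a ≤ n),
      (poppedFibGraph n).Reachable (sVtx n a h1 h2) (sVtx n 1 le_rfl (by omega)) := by
  intro a
  induction a using Nat.strong_induction_on with
  | _ a ih =>
    intro h1 h2
    rcases eq_or_lt_of_le h1 with h | h
    · subst h; exact SimpleGraph.Reachable.refl _
    · have ha2 : 2 ≤ a := h
      obtain ⟨b, hb1, hba, hf⟩ := exists_fib_partner_s3 ha2
      have hadj : (poppedFibGraph n).Adj (sVtx n a h1 h2) (sVtx n b hb1 (by omega)) := by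
        refine ⟨?_, a, Finset.mem_singleton_self a, b, Finset.mem_singleton_self b,
          by omega, hf⟩
        intro hEq
        have : ({a} : Finset ℕ) = {b} := congrArg Subtype.val hEq
        simp only [Finset.singleton_inj] at this
        omega
      exact hadj.reachable.trans (ih b hba hb1 (by omega))

/-- For `n ≥ 2`, the Fibonacci-sum set-graph is connected. -/
theorem fibSumSetGraph_connected (n : ℕ) (hn : 2 ≤ n) :
    (poppedFibGraph n).Connected := by
  have hne : Nonempty (Vtx n) := ⟨sVtx n 1 le_rfl (by omega)⟩
  rw [SimpleGraph.connected_iff]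
  refine ⟨?_, hne⟩
  -- suffices: every vertex reachable to sVtx n 1
  have key : ∀ A : Vtx n, (poppedFibGraph n).Reachable A (sVtx n 1 le_rfl (by omega)) := by
    intro A
    obtain ⟨hsub, ⟨i, hi⟩⟩ := A.2
    have hiIcc := hsub hi
    rw [Finset.mem_Icc] at hiIcc
    obtain ⟨hi1, hin⟩ := hiIcc
    rcases eq_or_lt_of_le hi1 with h | h
    · -- i = 1 : A adjacent to {2}
      subst h
      have hadj : (poppedFibGraph n).Adj A (sVtx n 2 (by omega) hn) := by
        refine ⟨?_, 1, hi, 2, Finset.mem_singleton_self 2, by omega, ⟨4, by decide⟩⟩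
        intro hEq
        rw [hEq] at hi
        simp [sVtx] at hi
      exact hadj.reachable.trans (singleton_reach n hn 2 (by omega) hn)
    · have hi2 : 2 ≤ i := h
      obtain ⟨b, hb1, hbi, hf⟩ := exists_fib_partner_s3 hi2
      have hadj : (poppedFibGraph n).Adj A (sVtx n b hb1 (by omega)) := by
        refine ⟨?_, i, hi, b, Finset.mem_singleton_self b, by omega, hf⟩
        intro hEq
        rw [hEq] at hi
        simp [sVtx] at hi
        omega
      exact hadj.reachable.trans (singleton_reach n hn b hb1 (by omega))
  intro A B
  exact (key A).trans (key B).symm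
end

section
/- For every k in {1,2,...,n} with n ≥ 2, there exists i in {1,2,...,n} with i ≠ k such that i + k is a Fibonacci number. -/
lemma exists_fib_bracket (k : ℕ) (hk : 1 ≤ k) :
    ∃ m, 2 ≤ m ∧ Nat.fib m ≤ k ∧ k < Nat.fib (m + 1) := by
  induction k with
  | zero => omega
  | succ k ih =>
    rcases Nat.eq_or_lt_of_le hk with h1 | h1
    · exact ⟨2, le_refl _, by simp [Nat.fib], by simp [← h1, Nat.fib]⟩
    · obtain ⟨m, hm2, hle, hlt⟩ := ih (by omega)
      rcases Nat.lt_or_ge (k + 1) (Nat.fib (m + 1)) with h | h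
      · exact ⟨m, hm2, by omega, h⟩
      · refine ⟨m + 1, by omega, h, ?_⟩
        have h1 : 1 ≤ Nat.fib m := Nat.fib_pos.mpr (by omega)
        have : Nat.fib (m + 1 + 1) = Nat.fib m + Nat.fib (m + 1) := Nat.fib_add_two
        omega

/-- For every `k ∈ {1,…,n}` with `n ≥ 2` there is `i ∈ {1,…,n}`, `i ≠ k`,
with `i + k` a Fibonacci number. -/
theorem exists_fib_partner (n k : ℕ) (hn : 2 ≤ n) (hk : k ∈ Finset.Icc 1 n) :
    ∃ i ∈ Finset.Icc 1 n, i ≠ k ∧ IsFib (i + k) := by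
  simp only [Finset.mem_Icc] at hk ⊢
  obtain ⟨hk1, hkn⟩ := hk
  rcases Nat.eq_or_lt_of_le hk1 with h1 | h1
  · -- k = 1 : take i = 2, i + k = 3 = fib 4
    exact ⟨2, ⟨by omega, hn⟩, by omega, ⟨4, by simp [Nat.fib, ← h1]⟩⟩
  · -- k ≥ 2
    obtain ⟨m, hm2, hle, hlt⟩ := exists_fib_bracket k (by omega)
    refine ⟨Nat.fib (m + 1) - k, ⟨by omega, ?_⟩, ?_, ⟨m + 1, by omega⟩⟩
    · -- fib (m+1) - k ≤ n : show fib (m+1) < 2k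
      have hfib : Nat.fib (m + 1) = Nat.fib (m - 1) + Nat.fib m := by
        have := Nat.fib_add_two (n := m - 1)
        have hm : m - 1 + 2 = m + 1 := by omega
        have hm' : m - 1 + 1 = m := by omega
        rw [hm, hm'] at this
        omega
      have hmono : Nat.fib (m - 1) ≤ Nat.fib m := Nat.fib_mono (by omega)
      rcases Nat.eq_or_lt_of_le hmono with heq | hlt'
      · -- fib (m-1) = fib m forces m = 2, fib m = 1 < k, contradiction path
        have hm2' : m = 2 ∨ 3 ≤ m := by omega
        rcases hm2' with rfl | h3
        · simp [Nat.fib] at hfib ⊢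
          omega
        · have : Nat.fib (m - 1) < Nat.fib m :=
            Nat.fib_lt_fib_succ (n := m - 1) (by omega) |>.trans_eq (by congr 1; omega)
          omega
      · omega
    · -- i ≠ k : fib (m+1) ≠ 2k since fib(m+1) < 2k
      have hfib : Nat.fib (m + 1) = Nat.fib (m - 1) + Nat.fib m := by
        have := Nat.fib_add_two (n := m - 1)
        have hm : m - 1 + 2 = m + 1 := by omega
        have hm' : m - 1 + 1 = m := by omega
        rw [hm, hm'] at this
        omega
      have hmono : Nat.fib (m - 1) ≤ Nat.fib m := Nat.fib_mono (by omega)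
      rcases Nat.eq_or_lt_of_le hmono with heq | hlt'
      · have hm2' : m = 2 ∨ 3 ≤ m := by omega
        rcases hm2' with rfl | h3
        · simp [Nat.fib] at hfib ⊢
          omega
        · have : Nat.fib (m - 1) < Nat.fib m :=
            Nat.fib_lt_fib_succ (n := m - 1) (by omega) |>.trans_eq (by congr 1; omega)
          omega
      · omega
end

section
/- For n ≥ 2 and every vertex S of the Fibonacci-sum set-graph with S ≠ {1,...,n}, the loop number of S is strictly less than the loop number of {1,...,n}; hence {1,...,n} is the unique vertex of maximum loop number. -/
lemma exists_fib_between (k : ℕ) (hk : 2 ≤ k) : ∃ F, IsFib F ∧ k < F ∧ F < 2 * k := by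
  have hex : ∃ m, k < Nat.fib m := by
    refine ⟨k + 5, lt_of_lt_of_le (by omega) (Nat.le_fib_self (by omega))⟩
  classical
  set m := Nat.find hex with hm
  have hmk : k < Nat.fib m := Nat.find_spec hex
  have hm4 : 4 ≤ m := by
    by_contra h
    have h3 : Nat.fib m ≤ Nat.fib 3 := Nat.fib_mono (by omega)
    have h3' : Nat.fib 3 = 2 := rfl
    omega
  have h1 : Nat.fib (m - 1) ≤ k := by
    have := Nat.find_min hex (m := m - 1) (by omega)
    omega
  have h2 : Nat.fib (m - 2) < Nat.fib (m - 1) := by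
    have hlt := Nat.fib_lt_fib_succ (n := m - 2) (by omega)
    rwa [show m - 2 + 1 = m - 1 by omega] at hlt
  have hsum : Nat.fib m = Nat.fib (m - 2) + Nat.fib (m - 1) := by
    have h := Nat.fib_add_two (n := m - 2)
    simp only [show m - 2 + 2 = m by omega, show m - 2 + 1 = m - 1 by omega] at h
    exact h
  exact ⟨Nat.fib m, ⟨m, rfl⟩, hmk, by omega⟩

lemma key (n k : ℕ) (hn : 2 ≤ n) (hk1 : 1 ≤ k) (hk2 : k ≤ n) :
    ∃ i j, 1 ≤ i ∧ i ≤ n ∧ 1 ≤ j ∧ j ≤ n ∧ i < j ∧ IsFib (i + j) ∧ (i = k ∨ j = k) := by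
  rcases Nat.lt_or_ge k 2 with h | h
  · -- k = 1, use pair (1, 2), sum 3 = fib 4
    exact ⟨1, 2, le_refl _, by omega, by omega, hn, by omega, ⟨4, rfl⟩, by omega⟩
  · obtain ⟨F, hF, h1, h2⟩ := exists_fib_between k h
    refine ⟨F - k, k, by omega, by omega, hk1, hk2, by omega, ?_, Or.inr rfl⟩
    have : F - k + k = F := by omega
    rw [this]; exact hF

/-- For `n ≥ 2`, every proper nonempty subset of `{1,…,n}` has strictly smaller
loop number than `{1,…,n}`; hence `{1,…,n}` is the unique vertex of maximum loop number. -/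
theorem loopNum_full_unique_max (n : ℕ) (hn : 2 ≤ n) (S : Finset ℕ)
    (hS : S ⊆ Finset.Icc 1 n) (hne : S.Nonempty) (hSn : S ≠ Finset.Icc 1 n) :
    loopNum S < loopNum (Finset.Icc 1 n) := by
  classical
  have hss : S ⊂ Finset.Icc 1 n := lt_of_le_of_ne hS hSn
  obtain ⟨k, hkI, hkS⟩ := Finset.exists_of_ssubset hss
  rw [Finset.mem_Icc] at hkI
  obtain ⟨i, j, hi1, hin, hj1, hjn, hij, hfib, hk⟩ := key n k hn hkI.1 hkI.2
  unfold loopNum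
  apply Finset.card_lt_card
  constructor
  · intro p hp
    simp only [Finset.mem_filter, Finset.mem_product, Finset.mem_Icc] at hp ⊢
    exact ⟨⟨Finset.mem_Icc.mp (hS hp.1.1), Finset.mem_Icc.mp (hS hp.1.2)⟩, hp.2⟩
  · intro hcon
    have hmem : (i, j) ∈ (Finset.Icc 1 n ×ˢ Finset.Icc 1 n).filter
        (fun p => p.1 < p.2 ∧ IsFib (p.1 + p.2)) := by
      simp only [Finset.mem_filter, Finset.mem_product, Finset.mem_Icc]
      exact ⟨⟨⟨hi1, hin⟩, ⟨hj1, hjn⟩⟩, hij, hfib⟩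
    have := hcon hmem
    simp only [Finset.mem_filter, Finset.mem_product] at this
    rcases hk with rfl | rfl
    · exact hkS this.1.1
    · exact hkS this.1.2
end

section
/- For n ≥ 2 and every k with 2 ≤ k ≤ n, the loop number of the vertex {1,2,...,k} in the Fibonacci-sum set-graph G^F_{A^(n)} is at least k − 1; in particular, for each m with 0 ≤ m ≤ n − 1 there exists a vertex whose loop number is at least m, and singletons have loop number 0. -/
lemma exists_partner_s8 (i : ℕ) (hi : 2 ≤ i) : ∃ j, 1 ≤ j ∧ j < i ∧ IsFib (i + j) := by
  classical
  have hex : ∃ m, i < Nat.fib m :=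
    ⟨i + 5, lt_of_lt_of_le (by omega) (Nat.le_fib_self (by omega))⟩
  set m := Nat.find hex with hmdef
  have hm : i < Nat.fib m := Nat.find_spec hex
  have hmin : ∀ l, l < m → ¬ i < Nat.fib l := fun l hl => Nat.find_min hex hl
  have hm4 : 4 ≤ m := by
    by_contra h
    push_neg at h
    have hle : Nat.fib m ≤ 2 := by interval_cases m <;> simp [Nat.fib]
    omega
  have h1 : Nat.fib (m - 1) ≤ i := by
    have := hmin (m - 1) (by omega); omega
  have h2 : Nat.fib (m - 2) < Nat.fib (m - 1) := by
    have := Nat.fib_lt_fib_succ (n := m - 2) (by omega)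
    have he : m - 2 + 1 = m - 1 := by omega
    rwa [he] at this
  have h3 : Nat.fib m = Nat.fib (m - 2) + Nat.fib (m - 1) := by
    have := Nat.fib_add_two (n := m - 2)
    have he1 : m - 2 + 2 = m := by omega
    have he2 : m - 2 + 1 = m - 1 := by omega
    rw [he1, he2] at this
    exact this
  exact ⟨Nat.fib m - i, by omega, by omega, ⟨m, by omega⟩⟩

noncomputable def partner (i : ℕ) : ℕ :=
  if h : 2 ≤ i then (exists_partner_s8 i h).choose else 0

lemma partner_spec {i : ℕ} (hi : 2 ≤ i) :
    1 ≤ partner i ∧ partner i < i ∧ IsFib (i + partner i) := by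
  rw [partner, dif_pos hi]
  exact (exists_partner_s8 i hi).choose_spec

theorem loopNum_initial_segments (n : ℕ) (hn : 2 ≤ n) :
    (∀ k, 2 ≤ k → k ≤ n → k - 1 ≤ loopNum (Finset.Icc 1 k)) ∧
    (∀ m, m ≤ n - 1 → ∃ S : Finset ℕ, S ⊆ Finset.Icc 1 n ∧ S.Nonempty ∧
      m ≤ loopNum S) ∧
    (∀ j ∈ Finset.Icc 1 n, loopNum ({j} : Finset ℕ) = 0) := by
  classical
  have main : ∀ k, 2 ≤ k → k - 1 ≤ loopNum (Finset.Icc 1 k) := by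
    intro k hk
    have hcard :
        (Finset.Icc 2 k).card ≤
          ((Finset.Icc 1 k ×ˢ Finset.Icc 1 k).filter
            (fun p => p.1 < p.2 ∧ IsFib (p.1 + p.2))).card := by
      apply Finset.card_le_card_of_injOn (fun i => (partner i, i))
      · intro i hi
        simp only [Finset.mem_coe, Finset.mem_Icc] at hi
        obtain ⟨h1, h2, h3⟩ := partner_spec hi.1
        simp only [Finset.mem_coe, Finset.mem_filter, Finset.mem_product, Finset.mem_Icc]
        exact ⟨⟨⟨h1, by omega⟩, ⟨by omega, hi.2⟩⟩, h2, by rwa [Nat.add_comm] at h3⟩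
      · intro a _ b _ hab
        exact (Prod.mk.injEq _ _ _ _).mp hab |>.2
    have : (Finset.Icc 2 k).card = k - 1 := by rw [Nat.card_Icc]; omega
    unfold loopNum
    omega
  refine ⟨fun k hk _ => main k hk, ?_, ?_⟩
  · intro m hm
    refine ⟨Finset.Icc 1 (m + 1), ?_, ?_, ?_⟩
    · exact Finset.Icc_subset_Icc le_rfl (by omega)
    · exact ⟨1, by simp⟩
    · rcases Nat.eq_zero_or_pos m with h | h
      · simp [h]
      · have := main (m + 1) (by omega)
        omega
  · intro j _
    unfold loopNum
    rw [Finset.card_eq_zero, Finset.filter_eq_empty_iff]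
    intro p hp
    simp only [Finset.singleton_product_singleton, Finset.mem_singleton] at hp
    subst hp
    simp
end

section
/- For n ≥ 2, the Fibonacci-sum graph G^F_n is bipartite; equivalently, it contains no odd cycle. -/
set_option maxHeartbeats 2000000
open goldenRatio



/-- The Fibonacci-sum graph `G^F_n` on `{1,…,n}`:
`i ~ j` iff `i ≠ j` and `i + j` is a Fibonacci number. -/
def fibSumGraph (n : ℕ) : SimpleGraph ℕ where
  Adj i j := i ∈ Finset.Icc 1 n ∧ j ∈ Finset.Icc 1 n ∧ i ≠ j ∧ IsFib (i + j)
  symm := by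
    refine ⟨?_⟩
    rintro i j ⟨h1, h2, h3, h4⟩
    exact ⟨h2, h1, h3.symm, by rwa [Nat.add_comm]⟩
  loopless := by refine ⟨?_⟩; rintro i ⟨-, -, h, -⟩; exact h rfl



lemma fib_pair_of_unit : ∀ k : ℕ, ∀ l : ℕ, 1 ≤ k → 1 ≤ l →
    ((l:ℤ)^2 - k*l - k^2 = 1 ∨ (l:ℤ)^2 - k*l - k^2 = -1) →
    ∃ r, k = Nat.fib r ∧ l = Nat.fib (r+1) := by
  intro k
  induction k using Nat.strong_induction_on with
  | _ k ih =>
    intro l hk hl hP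
    have hlZ : (1:ℤ) ≤ (l:ℤ) := by exact_mod_cast hl
    rcases eq_or_lt_of_le hk with h1 | h2
    · -- k = 1
      have hk1 : k = 1 := h1.symm
      subst hk1
      norm_num at hP
      have hl2 : (l:ℤ) ≤ 2 := by
        rcases hP with h | h <;> nlinarith [sq_nonneg ((l:ℤ) - 3)]
      have : l = 1 ∨ l = 2 := by omega
      rcases this with rfl | rfl
      · exact ⟨1, by decide, by decide⟩
      · exact ⟨2, by decide, by decide⟩
    · -- 2 ≤ k
      have hkZ : (2:ℤ) ≤ (k:ℤ) := by exact_mod_cast h2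
      have hkl : (k:ℤ) < l := by
        by_contra h
        push_neg at h
        have : (l:ℤ)^2 - k*l ≤ 0 := by nlinarith
        rcases hP with hp | hp <;> nlinarith
      have h2k : (l:ℤ) < 2*k := by
        by_contra h
        push_neg at h
        rcases hP with hp | hp <;> nlinarith
      have hklN : k < l := by exact_mod_cast hkl
      have hlk1 : 1 ≤ l - k := by omega
      have hlkk : l - k < k := by
        have : (l:ℤ) - k < k := by linarith
        omega
      have hcast : ((l - k : ℕ) : ℤ) = (l:ℤ) - k := by
        push_cast [Nat.cast_sub hklN.le]; ring
      have hP' : ((k:ℤ))^2 - ((l-k:ℕ):ℤ)*(k:ℤ) - ((l-k:ℕ):ℤ)^2 = 1 ∨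
          ((k:ℤ))^2 - ((l-k:ℕ):ℤ)*(k:ℤ) - ((l-k:ℕ):ℤ)^2 = -1 := by
        rw [hcast]
        rcases hP with hp | hp
        · right; nlinarith
        · left; nlinarith
      obtain ⟨r, hr1, hr2⟩ := ih (l - k) hlkk k hlk1 hk hP'
      refine ⟨r + 1, hr2, ?_⟩
      have : l = (l - k) + k := by omega
      rw [this, hr1, hr2]
      show _ = Nat.fib (r + 2)
      rw [Nat.fib_add_two]



lemma prod_identity (k l : ℤ) :
    ((k:ℝ)*φ - l) * ((k:ℝ)*ψ - l) = ((l^2 - k*l - k^2 : ℤ) : ℝ) := by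
  push_cast
  linear_combination ((k:ℝ)^2) * Real.goldenRatio_mul_goldenConj - ((k:ℝ)*(l:ℝ)) * Real.goldenRatio_add_goldenConj

lemma P_ne_zero (k l : ℤ) (hk : k ≠ 0) : l^2 - k*l - k^2 ≠ 0 := by
  intro h
  have hpi := prod_identity k l
  rw [h] at hpi
  norm_num at hpi
  rcases hpi with h' | h'
  · exact (Real.goldenRatio_irrational.intCast_mul hk).ne_int l (by linarith)
  · exact (Real.goldenConj_irrational.intCast_mul hk).ne_int l (by linarith)

lemma approx_ge (k l : ℤ) (hk : 1 ≤ k) :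
    (1:ℝ) ≤ |(k:ℝ)*φ - l| * (|(k:ℝ)*φ - l| + k*√5) := by
  have hP := P_ne_zero k l (by omega)
  have h1 : (1:ℝ) ≤ |((l^2 - k*l - k^2 : ℤ) : ℝ)| := by
    have h2 := Int.one_le_abs hP
    calc (1:ℝ) ≤ ((|l^2 - k*l - k^2| : ℤ) : ℝ) := by exact_mod_cast h2
    _ = _ := by push_cast; rfl
  rw [← prod_identity k l, abs_mul] at h1
  have hk0 : (0:ℝ) ≤ (k:ℝ) := by exact_mod_cast (by omega : (0:ℤ) ≤ k)
  have hsub : |(k:ℝ)*ψ - l| ≤ |(k:ℝ)*φ - l| + k*√5 := by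
    have h3 : (k:ℝ)*ψ - l = ((k:ℝ)*φ - l) - k*(φ - ψ) := by ring
    rw [h3]
    calc |((k:ℝ)*φ - l) - k*(φ - ψ)| ≤ |(k:ℝ)*φ - l| + |(k:ℝ)*(φ - ψ)| := abs_sub _ _
    _ = |(k:ℝ)*φ - l| + k*√5 := by
        rw [Real.goldenRatio_sub_goldenConj, abs_mul, abs_of_nonneg hk0,
          abs_of_nonneg (Real.sqrt_nonneg 5)]
  calc (1:ℝ) ≤ |(k:ℝ)*φ - l| * |(k:ℝ)*ψ - l| := h1
  _ ≤ |(k:ℝ)*φ - l| * (|(k:ℝ)*φ - l| + k*√5) :=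
      mul_le_mul_of_nonneg_left hsub (abs_nonneg _)

lemma approx_le (k l : ℤ) (hk : 1 ≤ k) :
    |((l^2 - k*l - k^2 : ℤ) : ℝ)| ≤ |(k:ℝ)*φ - l| * (|(k:ℝ)*φ - l| + k*√5) := by
  have hk0 : (0:ℝ) ≤ (k:ℝ) := by exact_mod_cast (by omega : (0:ℤ) ≤ k)
  rw [← prod_identity k l, abs_mul]
  have hsub : |(k:ℝ)*ψ - l| ≤ |(k:ℝ)*φ - l| + k*√5 := by
    have h3 : (k:ℝ)*ψ - l = ((k:ℝ)*φ - l) - k*(φ - ψ) := by ring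
    rw [h3]
    calc |((k:ℝ)*φ - l) - k*(φ - ψ)| ≤ |(k:ℝ)*φ - l| + |(k:ℝ)*(φ - ψ)| := abs_sub _ _
    _ = |(k:ℝ)*φ - l| + k*√5 := by
        rw [Real.goldenRatio_sub_goldenConj, abs_mul, abs_of_nonneg hk0,
          abs_of_nonneg (Real.sqrt_nonneg 5)]
  exact mul_le_mul_of_nonneg_left hsub (abs_nonneg _)

lemma fib_mul_gold (m : ℕ) : (Nat.fib m : ℝ) * φ = Nat.fib (m+1) - ψ^m := by
  have := Real.fib_succ_sub_goldenRatio_mul_fib m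
  linarith [this]


/-- If `fract (i·φ)` lies in the short window next to `1/2` (on the side matching
the parity of `m`), with `2i < fib m`, we get a contradiction. -/
lemma window_contra (m i : ℕ) (hm : 4 ≤ m) (hi : 1 ≤ i)
    (h2i : 2*i + 1 ≤ Nat.fib m) (a : ℝ) (ha : a = Int.fract ((i:ℝ)*φ))
    (hcase : (Even m ∧ 1/2 - (-ψ)^m < a ∧ a < 1/2) ∨
      (Odd m ∧ 1/2 ≤ a ∧ a ≤ 1/2 + (-ψ)^m)) : False := by
  have h5 : √5 ^ 2 = 5 := Real.sq_sqrt (by norm_num)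
  have h5n : (0:ℝ) ≤ √5 := Real.sqrt_nonneg 5
  have h5a : (2.23:ℝ) < √5 := by nlinarith
  have h5b : √5 < (2.24:ℝ) := by nlinarith
  obtain ⟨q, hqdef⟩ : ∃ q : ℝ, q = -ψ := ⟨-ψ, rfl⟩
  have hψq : ψ = -q := by rw [hqdef]; ring
  rw [← hqdef] at hcase
  have hq0 : 0 < q := by rw [hqdef]; linarith [Real.goldenConj_neg]
  have hψdef : ψ = (1 - √5)/2 := rfl
  have hq1 : q < 0.62 := by rw [hqdef, hψdef]; linarith
  have hφq : φ * q = 1 := by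
    have h := Real.goldenRatio_mul_goldenConj
    rw [hqdef]; linarith
  have hq1' : q < 1 := by linarith
  have hqm4 : q^m ≤ q^4 := pow_le_pow_of_le_one hq0.le hq1'.le hm
  have hq4 : q^4 < 0.15 := by
    have h62 : q^4 < 0.62^4 := by
      apply pow_lt_pow_left₀ hq1 hq0.le
      norm_num
    nlinarith
  have hqm : q^m < 0.15 := lt_of_le_of_lt hqm4 hq4
  have hqm0 : 0 < q^m := pow_pos hq0 m
  have hφm : φ^m * q^m = 1 := by rw [← mul_pow, hφq, one_pow]
  have hfm : (3:ℕ) ≤ Nat.fib m := by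
    calc (3:ℕ) = Nat.fib 4 := by decide
    _ ≤ Nat.fib m := Nat.fib_mono hm
  have hfib5 : √5 * (Nat.fib m : ℝ) = φ^m - ψ^m := by
    rw [Real.coe_fib_eq]; field_simp
  have h2iR : 2*(i:ℝ) + 1 ≤ (Nat.fib m : ℝ) := by exact_mod_cast h2i
  obtain ⟨x, hxdef⟩ : ∃ x : ℝ, x = (i:ℝ)*φ := ⟨_, rfl⟩
  have hax : a = x - ⌊x⌋ := by rw [ha, hxdef]; exact (Int.self_sub_floor _).symm
  -- the doubled approximation data
  obtain ⟨k, hkdef⟩ : ∃ k : ℤ, k = 2*(i:ℤ) := ⟨_, rfl⟩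
  obtain ⟨l, hldef⟩ : ∃ l : ℤ, l = 2*⌊x⌋ + 1 := ⟨_, rfl⟩
  have hkpos : (1:ℤ) ≤ k := by
    have : (1:ℤ) ≤ (i:ℤ) := by exact_mod_cast hi
    omega
  have hkl : (k:ℝ)*φ - l = 2*a - 1 := by
    push_cast [hkdef, hldef]
    rw [hax, hxdef]; ring
  have hψm_bnd : |2*a - 1| ≤ 2*q^m := by
    rcases hcase with ⟨_, h1, h2⟩ | ⟨_, h1, h2⟩ <;> rw [abs_le] <;> constructor <;> linarith
  have hε : |(k:ℝ)*φ - l| ≤ 2*q^m := by rw [hkl]; exact hψm_bnd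
  have hεnn : (0:ℝ) ≤ |(k:ℝ)*φ - l| := abs_nonneg _
  have hk5 : (k:ℝ)*√5 ≤ φ^m - ψ^m - √5 := by
    push_cast [hkdef]
    have hle : 2*(i:ℝ) ≤ (Nat.fib m : ℝ) - 1 := by linarith
    nlinarith [mul_le_mul_of_nonneg_right hle h5n, hfib5]
  have hψabs : |ψ^m| = q^m := by
    rw [abs_pow, hψq, abs_neg, abs_of_pos hq0]
  have hψub : ψ^m ≤ q^m := le_of_abs_le hψabs.le
  have hψlb : -q^m ≤ ψ^m := by
    have := neg_abs_le (ψ^m); rw [hψabs] at this; exact this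
  -- |P| < 2
  have hPb := approx_le k l hkpos
  have hPlt : |((l^2 - k*l - k^2 : ℤ):ℝ)| < 2 := by
    have hmul : |(k:ℝ)*φ - l| * (|(k:ℝ)*φ - l| + k*√5)
        ≤ (2*q^m) * (2*q^m + (φ^m - ψ^m - √5)) :=
      by
      have hkR : (0:ℝ) ≤ (k:ℝ) := by exact_mod_cast (by omega : (0:ℤ) ≤ k)
      exact mul_le_mul hε (add_le_add hε hk5)
        (add_nonneg hεnn (mul_nonneg hkR h5n)) (by linarith)
    have e1 : q^m*(-q^m) ≤ q^m*ψ^m := mul_le_mul_of_nonneg_left hψlb hqm0.le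
    have e2 : q^m*(2.23:ℝ) ≤ q^m*√5 := mul_le_mul_of_nonneg_left h5a.le hqm0.le
    have e3 : q^m*q^m ≤ 0.15*q^m := mul_le_mul_of_nonneg_right hqm.le hqm0.le
    have hnum : (2*q^m) * (2*q^m + (φ^m - ψ^m - √5)) < 2 := by
      have expand : (2*q^m) * (2*q^m + (φ^m - ψ^m - √5))
          = 4*(q^m*q^m) + 2*(φ^m*q^m) - 2*(q^m*ψ^m) - 2*(q^m*√5) := by ring
      rw [expand, hφm]
      nlinarith [e1, e2, e3, hqm0]
    linarith
  have hPlt' : |l^2 - k*l - k^2| < 2 := by exact_mod_cast hPlt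
  have hPne := P_ne_zero k l (by omega)
  have hPodd : ∃ c : ℤ, l^2 - k*l - k^2 = 2*c + 1 :=
    ⟨2*⌊x⌋^2 + 2*⌊x⌋ - 2*(i:ℤ)*⌊x⌋ - (i:ℤ) - 2*(i:ℤ)^2, by rw [hkdef, hldef]; ring⟩
  have hP1 : l^2 - k*l - k^2 = 1 ∨ l^2 - k*l - k^2 = -1 := by
    obtain ⟨c, hc⟩ := hPodd
    have := abs_lt.mp hPlt'
    omega
  -- floor is at least 1
  have hfx : (1:ℤ) ≤ ⌊x⌋ := by
    apply Int.le_floor.mpr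
    push_cast
    rw [hxdef]
    have hiR : (1:ℝ) ≤ (i:ℝ) := by exact_mod_cast hi
    nlinarith [Real.one_lt_goldenRatio]
  have hl1 : (1:ℤ) ≤ l := by omega
  -- convert to naturals and classify
  have hcast1 : ((2*i : ℕ) : ℤ) = k := by push_cast [hkdef]; ring
  have hcast2 : ((l.toNat : ℕ) : ℤ) = l := Int.toNat_of_nonneg (by omega)
  obtain ⟨r, hr1, hr2⟩ := fib_pair_of_unit (2*i) l.toNat (by omega)
    (by omega) (by rw [hcast1, hcast2]; exact hP1)
  -- identify ψ^r
  have hψr : ψ^r = 1 - 2*a := by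
    have h := Real.fib_succ_sub_goldenRatio_mul_fib r
    rw [← hr1, ← hr2] at h
    have e1 : ((2*i : ℕ) : ℝ) = (k:ℝ) := by exact_mod_cast hcast1
    have e2 : ((l.toNat : ℕ) : ℝ) = (l:ℝ) := by exact_mod_cast hcast2
    rw [e2, e1] at h
    rw [← h]; linarith [hkl]
  have hψrne : ψ^r ≠ 0 := pow_ne_zero _ Real.goldenConj_ne_zero
  have hqr : q^r ≤ 2*q^m ∧ ((Even m ∧ Even r) ∨ (Odd m ∧ Odd r)) := by
    rcases hcase with ⟨hme, h1, h2⟩ | ⟨hmo, h1, h2⟩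
    · have hpos : 0 < ψ^r := by rw [hψr]; linarith
      have hre : Even r := by
        by_contra hre
        have : ψ^r < 0 := (Nat.not_even_iff_odd.mp hre).pow_neg Real.goldenConj_neg
        linarith
      have : q^r = ψ^r := by rw [hψq, hre.neg_pow]
      constructor
      · rw [this, hψr]; linarith
      · exact Or.inl ⟨hme, hre⟩
    · have hneg : ψ^r < 0 := by
        rcases lt_or_eq_of_le (by rw [hψr]; linarith : ψ^r ≤ 0) with h | h
        · exact h
        · exact absurd h hψrne
      have hro : Odd r := by
        by_contra hro
        have : ψ^r = q^r := by rw [hψq, (Nat.not_odd_iff_even.mp hro).neg_pow]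
        nlinarith [pow_pos hq0 r]
      have : q^r = -ψ^r := by rw [hψq, hro.neg_pow]; ring
      constructor
      · rw [this, hψr]; linarith
      · exact Or.inr ⟨hmo, hro⟩
  obtain ⟨hqr_le, hpar⟩ := hqr
  -- r ≥ m
  have hrm : m ≤ r := by
    have hrge : m - 1 ≤ r := by
      by_contra hcon
      push_neg at hcon
      have hrm2 : r ≤ m - 2 := by omega
      have hmono : q^(m-2) ≤ q^r :=
        pow_le_pow_of_le_one hq0.le hq1'.le hrm2
      have hsplit : q^(m-2) * q^2 = q^m := by
        rw [← pow_add]; congr 1; omega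
      nlinarith [pow_pos hq0 (m-2), hqm0]
    rcases hpar with ⟨⟨m2, hm2⟩, ⟨r2, hr2'⟩⟩ | ⟨⟨m2, hm2⟩, ⟨r2, hr2'⟩⟩ <;> omega
  -- final contradiction
  have hfible : Nat.fib m ≤ Nat.fib r := Nat.fib_mono hrm
  omega


lemma fract_half_diff (m i j : ℕ) (hm : 4 ≤ m) (hi : 1 ≤ i) (hij : i < j)
    (hsum : i + j = Nat.fib m) :
    ¬ (Int.fract ((i:ℝ)*φ) < 1/2 ↔ Int.fract ((j:ℝ)*φ) < 1/2) := by
  -- numeric facts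
  have h5 : √5 ^ 2 = 5 := Real.sq_sqrt (by norm_num)
  have h5n : (0:ℝ) ≤ √5 := Real.sqrt_nonneg 5
  have h5a : (2.23:ℝ) < √5 := by nlinarith
  have h5b : √5 < (2.24:ℝ) := by nlinarith
  set q : ℝ := -ψ with hqdef
  have hψq : ψ = -q := by simp [hqdef]
  have hq0 : 0 < q := by simp only [hqdef]; linarith [Real.goldenConj_neg]
  have hψdef : ψ = (1 - √5)/2 := rfl
  have hq1 : q < 0.62 := by rw [hqdef, hψdef]; linarith
  have hφq : φ * q = 1 := by
    have h := Real.goldenRatio_mul_goldenConj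
    rw [hqdef]; linarith
  have hq1' : q < 1 := by linarith
  have hqm4 : q^m ≤ q^4 := pow_le_pow_of_le_one hq0.le hq1'.le hm
  have hq4 : q^4 < 0.15 := by
    have h62 : q^4 < 0.62^4 := by
      apply pow_lt_pow_left₀ hq1 hq0.le
      norm_num
    have h15 : (0.62:ℝ)^4 < 0.15 := by norm_num
    linarith
  have hqm : q^m < 0.15 := lt_of_le_of_lt hqm4 hq4
  have hqm0 : 0 < q^m := pow_pos hq0 m
  have hφm : φ^m * q^m = 1 := by rw [← mul_pow, hφq, one_pow]
  have hψabs : |ψ^m| = q^m := by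
    rw [abs_pow, hψq, abs_neg, abs_of_pos hq0]
  have hψub : ψ^m ≤ q^m := le_of_abs_le hψabs.le
  have hψlb : -q^m ≤ ψ^m := by
    have := neg_abs_le (ψ^m); rw [hψabs] at this; exact this
  -- fib facts
  have hfm : (3:ℕ) ≤ Nat.fib m := by
    calc (3:ℕ) = Nat.fib 4 := by decide
    _ ≤ Nat.fib m := Nat.fib_mono hm
  have hfib5 : √5 * (Nat.fib m : ℝ) = φ^m - ψ^m := by
    rw [Real.coe_fib_eq]
    field_simp
  have h2i : 2*i + 1 ≤ Nat.fib m := by omega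
  have h2iR : 2*(i:ℝ) + 1 ≤ (Nat.fib m : ℝ) := by exact_mod_cast h2i
  have hi5 : (i:ℝ)*√5 ≤ (φ^m - ψ^m - √5)/2 := by
    have hstep : (i:ℝ) ≤ ((Nat.fib m : ℝ) - 1)/2 := by linarith
    have hmul := mul_le_mul_of_nonneg_right hstep h5n
    linarith [hfib5]
  -- fract facts
  set x := (i:ℝ)*φ with hxdef
  set y := (j:ℝ)*φ with hydef
  have hiZ : ((i:ℤ)) ≠ 0 := by exact_mod_cast Nat.one_le_iff_ne_zero.mp hi
  have hjZ : ((j:ℤ)) ≠ 0 := by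
    have : 1 ≤ j := by omega
    exact_mod_cast Nat.one_le_iff_ne_zero.mp this
  have hirr_i : Irrational x := by
    have h := Real.goldenRatio_irrational.intCast_mul hiZ
    rwa [show ((i:ℤ):ℝ) * φ = x by push_cast [hxdef]; ring] at h
  have hirr_j : Irrational y := by
    have h := Real.goldenRatio_irrational.intCast_mul hjZ
    rwa [show ((j:ℤ):ℝ) * φ = y by push_cast [hydef]; ring] at h
  set a := Int.fract x with hadef
  set b := Int.fract y with hbdef
  have ha0 : 0 < a := by
    rcases lt_or_eq_of_le (Int.fract_nonneg x) with h | h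
    · exact h
    · exact absurd (by linarith [Int.self_sub_floor x] : x = (⌊x⌋:ℝ))
        (hirr_i.ne_int ⌊x⌋)
  have hb0 : 0 < b := by
    rcases lt_or_eq_of_le (Int.fract_nonneg y) with h | h
    · exact h
    · exact absurd (by linarith [Int.self_sub_floor y] : y = (⌊y⌋:ℝ))
        (hirr_j.ne_int ⌊y⌋)
  have ha1 : a < 1 := Int.fract_lt_one x
  have hb1 : b < 1 := Int.fract_lt_one y
  have hax : a = x - ⌊x⌋ := (Int.self_sub_floor x).symm
  have hby : b = y - ⌊y⌋ := (Int.self_sub_floor y).symm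
  -- the integer N
  set N : ℤ := (Nat.fib (m+1) : ℤ) - ⌊x⌋ - ⌊y⌋ with hNdef
  have hab : a + b = (N:ℝ) - ψ^m := by
    have hxy : x + y = (Nat.fib m : ℝ)*φ := by
      rw [hxdef, hydef, ← add_mul]
      congr 1
      exact_mod_cast congrArg (Nat.cast (R := ℝ)) hsum
    have hfg := fib_mul_gold m
    rw [hax, hby, hNdef]
    push_cast
    linarith
  have hN0 : (0:ℤ) ≤ N := by
    have hr : (-1:ℝ) < (N:ℝ) := by linarith [hab, ha0, hb0, hψlb, hqm, hqm0]
    have : (-1:ℤ) < N := by exact_mod_cast hr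
    omega
  have hN2 : N ≤ 2 := by
    have hr : (N:ℝ) < 3 := by linarith [hab, ha1, hb1, hψub, hqm, hqm0]
    have : N < (3:ℤ) := by exact_mod_cast hr
    omega
  -- the generic small-window contradiction at an integer point
  have contra1 : ∀ l : ℤ, |x - (l:ℝ)| < q^m → False := by
    intro l hl
    have key := approx_ge (i:ℤ) l (by exact_mod_cast hi)
    have hxx : ((i:ℤ):ℝ)*φ = x := by rw [hxdef]; push_cast; ring
    rw [hxx] at key
    have hiR : ((i:ℤ):ℝ) = (i:ℝ) := by push_cast; ring
    rw [hiR] at key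
    have hub : |x - (l:ℝ)| * (|x - (l:ℝ)| + (i:ℝ)*√5)
        ≤ q^m * (q^m + (φ^m - ψ^m - √5)/2) := by
      apply mul_le_mul hl.le (add_le_add hl.le hi5) ?_ hqm0.le
      have : (0:ℝ) ≤ (i:ℝ) := by positivity
      exact add_nonneg (abs_nonneg _) (mul_nonneg this h5n)
    have e1 : q^m*(-q^m) ≤ q^m*ψ^m := mul_le_mul_of_nonneg_left hψlb hqm0.le
    have e2 : q^m*(2.23:ℝ) ≤ q^m*√5 := mul_le_mul_of_nonneg_left h5a.le hqm0.le
    have e3 : q^m*q^m ≤ 0.15*q^m := mul_le_mul_of_nonneg_right hqm.le hqm0.le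
    have hnum : q^m * (q^m + (φ^m - ψ^m - √5)/2) < 1 := by
      have expand : q^m * (q^m + (φ^m - ψ^m - √5)/2)
          = q^m*q^m + (φ^m*q^m)/2 - (q^m*ψ^m)/2 - (q^m*√5)/2 := by ring
      rw [expand, hφm]
      linarith [e1, e2, e3, hqm0, hqm]
    linarith
  intro hiff
  rcases (by omega : N = 0 ∨ N = 1 ∨ N = 2) with hN | hN | hN
  · -- N = 0 : both fracts tiny
    rw [hN] at hab
    push_cast at hab
    apply contra1 ⌊x⌋
    have : x - (⌊x⌋:ℝ) = a := by rw [hax]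
    rw [this, abs_of_pos ha0]
    linarith
  · -- N = 1 : the two half-window cases
    rw [hN] at hab
    push_cast at hab
    by_cases hA : a < 1/2
    · have hB : b < 1/2 := hiff.mp hA
      -- ψ^m > 0, m even
      have hψpos : 0 < ψ^m := by linarith
      have hme : Even m := by
        by_contra hmo
        have : ψ^m < 0 := (Nat.not_even_iff_odd.mp hmo).pow_neg Real.goldenConj_neg
        linarith
      exact window_contra m i hm hi h2i a (by rw [hadef, hxdef])
        (Or.inl ⟨hme, by rw [← hqdef]; constructor <;> linarith⟩)
    · have hB : ¬ b < 1/2 := fun hb => hA (hiff.mpr hb)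
      push_neg at hA hB
      have hψneg : ψ^m < 0 := by
        rcases lt_or_eq_of_le (by linarith : ψ^m ≤ 0) with h | h
        · exact h
        · exact absurd h (pow_ne_zero _ Real.goldenConj_ne_zero)
      have hmo : Odd m := by
        by_contra hme
        have heq : ψ^m = q^m := by
          rw [hψq, (Nat.not_odd_iff_even.mp hme).neg_pow]
        linarith
      exact window_contra m i hm hi h2i a (by rw [hadef, hxdef])
        (Or.inr ⟨hmo, by rw [← hqdef]; constructor <;> linarith⟩)
  · -- N = 2 : both fracts near 1
    rw [hN] at hab
    push_cast at hab
    apply contra1 (⌊x⌋ + 1)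
    have hψpos : 0 < ψ^m := by linarith
    have : x - ((⌊x⌋:ℤ):ℝ) = a := by rw [hax]
    have hxl : x - ((⌊x⌋ + 1 : ℤ):ℝ) = a - 1 := by push_cast; linarith [hax]
    rw [hxl, abs_of_nonpos (by linarith)]
    linarith

/-- For `n ≥ 2`, the Fibonacci-sum graph `G^F_n` is bipartite (2-colorable). -/
theorem fibSumGraph_bipartite (n : ℕ) (hn : 2 ≤ n) :
    (fibSumGraph n).Colorable 2 := by
  have C : (fibSumGraph n).Coloring (Fin 2) :=
    SimpleGraph.Coloring.mk
      (fun v => if Int.fract ((v:ℝ)*φ) < 1/2 then 0 else 1) (by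
    intro v w hvw
    obtain ⟨hv, hw, hne, hfib⟩ := hvw
    simp only [Finset.mem_Icc] at hv hw
    obtain ⟨m, hm⟩ := hfib
    have h3 : 3 ≤ v + w := by omega
    have hm4 : 4 ≤ m := by
      by_contra h
      push_neg at h
      interval_cases m <;> simp [Nat.fib] at hm <;> omega
    intro hcol
    rcases Nat.lt_or_ge v w with hlt | hge
    · apply fract_half_diff m v w hm4 hv.1 hlt hm.symm
      by_cases h1 : Int.fract ((v:ℝ)*φ) < 1/2 <;>
        by_cases h2 : Int.fract ((w:ℝ)*φ) < 1/2
      · exact iff_of_true h1 h2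
      · simp only [h1, h2, if_true, if_false] at hcol; exact absurd hcol (by decide)
      · simp only [h1, h2, if_true, if_false] at hcol; exact absurd hcol (by decide)
      · exact iff_of_false h1 h2
    · have hlt : w < v := by omega
      apply fract_half_diff m w v hm4 hw.1 hlt (by omega)
      by_cases h1 : Int.fract ((v:ℝ)*φ) < 1/2 <;>
        by_cases h2 : Int.fract ((w:ℝ)*φ) < 1/2
      · exact iff_of_true h2 h1
      · simp only [h1, h2, if_true, if_false] at hcol; exact absurd hcol (by decide)
      · simp only [h1, h2, if_true, if_false] at hcol; exact absurd hcol (by decide)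
      · exact iff_of_false h2 h1)
  simpa using C.colorable
end
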